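/- For a perfectly calibrated classifier h on group G with base rate μ ∈ (0,1), the generalized false-negative rate satisfies FN(h) = (E[h(x)] − E[h(x)²])/μ, where FN(h) = E_G[1 − h(x) | y=1]. -/

import Mathlib

open Finset Set

/-- Probability of an event `S` under weights `w` on a finite sample space. -/
noncomputable def Pr {Ω : Type*} [Fintype Ω] (w : Ω → ℝ) (S : Set Ω) : ℝ :=
  ∑ ω, S.indicator w ω

/-- Expectation of `f` under weights `w`. -/
noncomputable def Ex {Ω : Type*} [Fintype Ω] (w : Ω → ℝ) (f : Ω → ℝ) : ℝ :=
  ∑ ω, w ω * f ω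

/-- Conditional expectation of `f` given event `S`. -/
noncomputable def condEx {Ω : Type*} [Fintype Ω] (w : Ω → ℝ) (f : Ω → ℝ) (S : Set Ω) : ℝ :=
  (∑ ω, S.indicator (fun ω' => w ω' * f ω') ω) / Pr w S

/-- `w` is a probability distribution. -/
def IsDistrib {Ω : Type*} [Fintype Ω] (w : Ω → ℝ) : Prop :=
  (∀ ω, 0 ≤ w ω) ∧ ∑ ω, w ω = 1

/-- Generalized false-positive rate `E[h(x) | y = 0]`. -/
noncomputable def FP {Ω : Type*} [Fintype Ω] (w : Ω → ℝ) (y : Ω → Bool) (h : Ω → ℝ) : ℝ :=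
  condEx w h {ω | y ω = false}

/-- Generalized false-negative rate `E[1 - h(x) | y = 1]`. -/
noncomputable def FN {Ω : Type*} [Fintype Ω] (w : Ω → ℝ) (y : Ω → Bool) (h : Ω → ℝ) : ℝ :=
  condEx w (fun ω => 1 - h ω) {ω | y ω = true}

/-- `h` is perfectly calibrated: for every value `p` of `h`,
`P[y = 1 ∧ h = p] = p · P[h = p]`, i.e. `P[y = 1 | h = p] = p` on the support of `h`. -/
def Calibrated {Ω : Type*} [Fintype Ω] (w : Ω → ℝ) (y : Ω → Bool) (h : Ω → ℝ) : Prop :=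
  ∀ p : ℝ, Pr w {ω | h ω = p ∧ y ω = true} = p * Pr w {ω | h ω = p}

/-- Calibration gap `∑_p |P[y=1 | h=p] - p| · P[h=p]`. -/
noncomputable def calibGap {Ω : Type*} [Fintype Ω] (w : Ω → ℝ) (y : Ω → Bool) (h : Ω → ℝ) : ℝ :=
  ∑ p ∈ Finset.image h Finset.univ,
    |Pr w {ω | h ω = p ∧ y ω = true} - p * Pr w {ω | h ω = p}|

/-- generalized false-negative rate of a calibrated classifier. -/
theorem fn_of_calibrated {Ω : Type*} [Fintype Ω]
    (w : Ω → ℝ) (y : Ω → Bool) (h : Ω → ℝ) (μ : ℝ)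
    (hw : IsDistrib w) (hh : ∀ ω, 0 ≤ h ω ∧ h ω ≤ 1)
    (hμ : μ = Pr w {ω | y ω = true}) (hμ0 : 0 < μ) (hμ1 : μ < 1)
    (hcal : Calibrated w y h) :
    FN w y h = (Ex w h - Ex w (fun ω => h ω ^ 2)) / μ := by
  classical
  have hPrf : ∀ (S : Set Ω) (f : Ω → ℝ), (∑ ω, S.indicator f ω)
      = ∑ ω ∈ Finset.univ.filter (fun ω => ω ∈ S), f ω := by
    intro S f
    rw [Finset.sum_indicator_eq_sum_filter]
  have hmem : ∀ ω : Ω, ω ∈ Finset.univ → h ω ∈ Finset.image h Finset.univ := by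
    intro ω _; exact Finset.mem_image_of_mem h (Finset.mem_univ ω)
  -- fiber identity helper
  have fib : ∀ (g : ℝ → ℝ),
      (∑ ω ∈ Finset.univ.filter (fun ω => y ω = true), w ω * g (h ω))
      = ∑ p ∈ Finset.image h Finset.univ,
          g p * Pr w {ω | h ω = p ∧ y ω = true} := by
    intro g
    rw [← Finset.sum_fiberwise_of_maps_to (g := h)
        (fun ω _ => hmem ω (Finset.mem_univ ω))]
    refine Finset.sum_congr rfl fun p _ => ?_
    have hPr : Pr w {ω | h ω = p ∧ y ω = true}
        = ∑ ω ∈ (Finset.univ.filter (fun ω => y ω = true)).filter (fun ω => h ω = p), w ω := by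
      rw [Pr, hPrf, Finset.filter_filter]
      exact Finset.sum_congr (by ext ω; simp [and_comm]) fun _ _ => rfl
    rw [hPr, Finset.mul_sum]
    refine Finset.sum_congr rfl fun ω hω => ?_
    have hp : h ω = p := (Finset.mem_filter.mp hω).2
    rw [hp, mul_comm]
  have fibAll : ∀ (g : ℝ → ℝ),
      (∑ ω, w ω * g (h ω))
      = ∑ p ∈ Finset.image h Finset.univ, g p * Pr w {ω | h ω = p} := by
    intro g
    rw [← Finset.sum_fiberwise_of_maps_to (g := h)
        (fun ω _ => hmem ω (Finset.mem_univ ω))]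
    refine Finset.sum_congr rfl fun p _ => ?_
    have hPr : Pr w {ω | h ω = p}
        = ∑ ω ∈ Finset.univ.filter (fun ω => h ω = p), w ω := by
      rw [Pr, hPrf]
      exact Finset.sum_congr (by ext ω; simp) fun _ _ => rfl
    rw [hPr, Finset.mul_sum]
    refine Finset.sum_congr rfl fun ω hω => ?_
    have hp : h ω = p := (Finset.mem_filter.mp hω).2
    rw [hp, mul_comm]
  -- (A): ∑_{y=1} w = E[h]
  have hA : (∑ ω ∈ Finset.univ.filter (fun ω => y ω = true), w ω) = Ex w h := by
    have h1 := fib (fun _ => 1)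
    simp only [mul_one, one_mul] at h1
    have h2 := fibAll (fun p => p)
    rw [h1, Ex, h2]
    exact Finset.sum_congr rfl fun p _ => hcal p
  -- (B): ∑_{y=1} w h = E[h²]
  have hB : (∑ ω ∈ Finset.univ.filter (fun ω => y ω = true), w ω * h ω)
      = Ex w (fun ω => h ω ^ 2) := by
    have h1 := fib (fun p => p)
    have h2 := fibAll (fun p => p ^ 2)
    rw [h1, Ex, h2]
    refine Finset.sum_congr rfl fun p _ => ?_
    rw [hcal p]; ring
  -- numerator
  have hnum : (∑ ω, ({ω | y ω = true} : Set Ω).indicator (fun ω' => w ω' * (1 - h ω')) ω)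
      = Ex w h - Ex w (fun ω => h ω ^ 2) := by
    rw [hPrf, ← hA, ← hB, ← Finset.sum_sub_distrib]
    exact Finset.sum_congr (by ext ω; simp) fun ω _ => by ring
  simp only [FN, condEx, ← hμ]
  rw [hnum]
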